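/- Let G be a connected 3-uniform hypergraph on {1,…,n} with at least one edge, and let f : V → ℤ/3ℤ satisfy Σ_{j∈e} f(j) = 0 in ℤ/3ℤ for every edge e ∈ E. If f is not constant, then f is surjective, i.e., all three level sets f⁻¹(0), f⁻¹(1), f⁻¹(2) are nonempty. -/
import Mathlib


open Finset

/-- Degree of vertex `i` in the hypergraph with edge set `E`. -/
def hdeg {n : ℕ} (E : Finset (Finset (Fin n))) (i : Fin n) : ℕ :=
  (E.filter fun e => i ∈ e).card

/-- Laplacian tensor action `((D - A) x^{k-1})_i` over ℂ. -/
noncomputable def lapC (k : ℕ) {n : ℕ} (E : Finset (Finset (Fin n)))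
    (x : Fin n → ℂ) (i : Fin n) : ℂ :=
  (hdeg E i : ℂ) * x i ^ (k - 1) -
    ∑ e ∈ E.filter (fun e => i ∈ e), ∏ j ∈ e.erase i, x j

/-- Signless Laplacian tensor action `((D + A) x^{k-1})_i` over ℂ. -/
noncomputable def slapC (k : ℕ) {n : ℕ} (E : Finset (Finset (Fin n)))
    (x : Fin n → ℂ) (i : Fin n) : ℂ :=
  (hdeg E i : ℂ) * x i ^ (k - 1) +
    ∑ e ∈ E.filter (fun e => i ∈ e), ∏ j ∈ e.erase i, x j

/-- Laplacian tensor action `((D - A) x^{k-1})_i` over ℝ. -/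
noncomputable def lapR (k : ℕ) {n : ℕ} (E : Finset (Finset (Fin n)))
    (x : Fin n → ℝ) (i : Fin n) : ℝ :=
  (hdeg E i : ℝ) * x i ^ (k - 1) -
    ∑ e ∈ E.filter (fun e => i ∈ e), ∏ j ∈ e.erase i, x j

/-- Signless Laplacian tensor action `((D + A) x^{k-1})_i` over ℝ. -/
noncomputable def slapR (k : ℕ) {n : ℕ} (E : Finset (Finset (Fin n)))
    (x : Fin n → ℝ) (i : Fin n) : ℝ :=
  (hdeg E i : ℝ) * x i ^ (k - 1) +
    ∑ e ∈ E.filter (fun e => i ∈ e), ∏ j ∈ e.erase i, x j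

/-- The hypergraph with edge set `E` is connected: every pair of distinct vertices is
joined by a chain of edges with consecutive edges intersecting. -/
def HConnected {n : ℕ} (E : Finset (Finset (Fin n))) : Prop :=
  ∀ i j : Fin n, i ≠ j → ∃ m : ℕ, ∃ es : Fin (m + 1) → Finset (Fin n),
    (∀ r, es r ∈ E) ∧ i ∈ es 0 ∧ j ∈ es (Fin.last m) ∧
    ∀ r : Fin m, (es r.castSucc ∩ es r.succ).Nonempty

theorem stmt_17 {n : ℕ} (hn : 3 ≤ n)
    (E : Finset (Finset (Fin n))) (hE : ∀ e ∈ E, e.card = 3)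
    (hconn : HConnected E) (hne : E.Nonempty)
    (f : Fin n → ZMod 3) (hf : ∀ e ∈ E, ∑ j ∈ e, f j = 0)
    (hnc : ¬ ∀ i j : Fin n, f i = f j) :
    Function.Surjective f := by
  -- First: there is an edge on which f is not constant.
  by_cases hall : ∀ e ∈ E, ∀ a ∈ e, ∀ b ∈ e, f a = f b
  · -- all edges constant ⇒ f constant via connectivity, contradiction
    exfalso
    apply hnc
    intro i j
    by_cases hij : i = j
    · rw [hij]
    obtain ⟨m, es, hmem, hi, hj, hint⟩ := hconn i j hij
    have key : ∀ r : Fin (m + 1), ∀ v ∈ es r, f i = f v := by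
      intro r
      induction r using Fin.induction with
      | zero => intro v hv; exact hall _ (hmem 0) i hi v hv
      | succ r ih =>
        intro v hv
        obtain ⟨w, hw⟩ := hint r
        rw [Finset.mem_inter] at hw
        have := ih w hw.1
        rw [this]
        exact hall _ (hmem r.succ) w hw.2 v hv
    exact key (Fin.last m) j hj
  · push_neg at hall
    obtain ⟨e, he, p, hp, q, hq, hpq⟩ := hall
    obtain ⟨a, b, c, hab, hac, hbc, habc⟩ := Finset.card_eq_three.mp (hE e he)
    have hsum : f a + f b + f c = 0 := by
      have := hf e he
      rw [habc] at this
      rw [Finset.sum_insert (by simp [hab, hac]), Finset.sum_insert (by simp [hbc]),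
        Finset.sum_singleton] at this
      linear_combination this
    have hnceq : ¬ (f a = f b ∧ f a = f c) := by
      rintro ⟨h1, h2⟩
      apply hpq
      have key : ∀ x ∈ ({a, b, c} : Finset (Fin n)), f x = f a := by
        intro x hx
        simp only [Finset.mem_insert, Finset.mem_singleton] at hx
        rcases hx with h | h | h <;> subst h
        exacts [rfl, h1.symm, h2.symm]
      rw [habc] at hp hq
      rw [key p hp, key q hq]
    intro w
    have : w = f a ∨ w = f b ∨ w = f c := by
      revert hsum hnceq
      generalize f a = x; generalize f b = y; generalize f c = z
      revert w x y z
      decide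
    rcases this with h | h | h
    exacts [⟨a, h.symm⟩, ⟨b, h.symm⟩, ⟨c, h.symm⟩]
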